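/- If Γ is a symmetric positive definite matrix and t, s ≥ 0, the SHEK covariance Cov(t,s) = (σ²/2)(e^{−Γ|t−s|} − e^{−Γ(t+s)})Γ⁻¹ is symmetric positive semidefinite when t = s, i.e., (σ²/2)(I − e^{−2Γt})Γ⁻¹ is symmetric PSD. -/

import Mathlib

open Matrix

theorem shek_diagonal_cov_posSemidef (n : ℕ) (Γ : Matrix (Fin n) (Fin n) ℝ)
    (hsymm : Γᵀ = Γ) (hpd : ∀ x : Fin n → ℝ, x ≠ 0 → 0 < x ⬝ᵥ Γ.mulVec x)
    (σ t : ℝ) (ht : 0 ≤ t) :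
    ((σ ^ 2 / 2) • (((1 : Matrix (Fin n) (Fin n) ℝ) - NormedSpace.exp (-(2 * t) • Γ)) * Γ⁻¹))ᵀ
        = (σ ^ 2 / 2) • (((1 : Matrix (Fin n) (Fin n) ℝ) - NormedSpace.exp (-(2 * t) • Γ)) * Γ⁻¹)
      ∧ ∀ x : Fin n → ℝ,
        0 ≤ x ⬝ᵥ ((σ ^ 2 / 2) • (((1 : Matrix (Fin n) (Fin n) ℝ) - NormedSpace.exp (-(2 * t) • Γ)) * Γ⁻¹)).mulVec x := by
  have hΓ : Γ.PosDef := by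
    refine posDef_iff_dotProduct_mulVec.mpr ⟨?_, fun x hx => ?_⟩
    · rwa [Matrix.IsHermitian, conjTranspose_eq_transpose_of_trivial]
    · simpa using hpd x hx
  have hH : Γ.IsHermitian := hΓ.1
  set U : Matrix (Fin n) (Fin n) ℝ := (hH.eigenvectorUnitary : Matrix (Fin n) (Fin n) ℝ) with hUdef
  set d : Fin n → ℝ := hH.eigenvalues with hddef
  have hdpos : ∀ i, 0 < d i := hΓ.eigenvalues_pos
  have hsU : star U * U = 1 := Unitary.coe_star_mul_self hH.eigenvectorUnitary
  have hUs : U * star U = 1 := Unitary.coe_mul_star_self hH.eigenvectorUnitary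
  have hUinv : U⁻¹ = star U := inv_eq_left_inv hsU
  have hsUinv : (star U)⁻¹ = U := inv_eq_left_inv hUs
  have hspec : Γ = U * diagonal d * star U := by
    have := hH.spectral_theorem
    simpa [hUdef, hddef, Function.comp] using this
  -- exponential
  have hexp : NormedSpace.exp (-(2 * t) • Γ)
      = U * diagonal (fun i => Real.exp (-(2 * t) * d i)) * star U := by
    have h1 : -(2 * t) • Γ = U * diagonal (fun i => -(2 * t) * d i) * U⁻¹ := by
      rw [hUinv, hspec,
        show (fun i => -(2 * t) * d i) = (-(2 * t)) • d from rfl,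
        diagonal_smul, mul_smul_comm, smul_mul_assoc]
    rw [h1, Matrix.exp_conj _ _ ⟨⟨U, star U, hUs, hsU⟩, rfl⟩,
      Matrix.exp_diagonal, hUinv,
      show NormedSpace.exp (fun i => -(2 * t) * d i) = fun i => Real.exp (-(2 * t) * d i)
        from funext fun i => by rw [Pi.coe_exp, Real.exp_eq_exp_ℝ]]
  have hinv : Γ⁻¹ = U * diagonal (fun i => (d i)⁻¹) * star U := by
    apply inv_eq_right_inv
    calc Γ * (U * diagonal (fun i => (d i)⁻¹) * star U)
        = U * (diagonal d * (star U * U) * diagonal (fun i => (d i)⁻¹)) * star U := by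
          rw [hspec]; simp only [Matrix.mul_assoc]
      _ = 1 := by
          rw [hsU, mul_one, diagonal_mul_diagonal]
          rw [show (fun i => d i * (d i)⁻¹) = fun _ => (1:ℝ) from
            funext fun i => mul_inv_cancel₀ (hdpos i).ne', diagonal_one, mul_one, hUs]
  have hone : (1 : Matrix (Fin n) (Fin n) ℝ) = U * 1 * star U := by
    rw [mul_one, hUs]
  have key : ((1 : Matrix (Fin n) (Fin n) ℝ) - NormedSpace.exp (-(2 * t) • Γ)) * Γ⁻¹
      = U * diagonal (fun i => (1 - Real.exp (-(2 * t) * d i)) * (d i)⁻¹) * star U := by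
    rw [hexp, hinv]
    nth_rewrite 1 [hone]
    rw [← Matrix.sub_mul, ← Matrix.mul_sub]
    calc U * (1 - diagonal fun i => Real.exp (-(2 * t) * d i)) * star U *
          (U * diagonal (fun i => (d i)⁻¹) * star U)
        = U * ((1 - diagonal fun i => Real.exp (-(2 * t) * d i)) * (star U * U) *
            diagonal (fun i => (d i)⁻¹)) * star U := by
          simp only [Matrix.mul_assoc]
      _ = U * diagonal (fun i => (1 - Real.exp (-(2 * t) * d i)) * (d i)⁻¹) * star U := by
          rw [hsU, mul_one, ← diagonal_one, diagonal_sub, diagonal_mul_diagonal]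
  have hPSD : (((1 : Matrix (Fin n) (Fin n) ℝ) - NormedSpace.exp (-(2 * t) • Γ)) * Γ⁻¹).PosSemidef := by
    rw [key]
    have hdnn : ∀ i, 0 ≤ (1 - Real.exp (-(2 * t) * d i)) * (d i)⁻¹ := fun i => by
      apply mul_nonneg
      · have : Real.exp (-(2 * t) * d i) ≤ 1 := by
          rw [Real.exp_le_one_iff]
          have := (hdpos i).le
          nlinarith
        linarith
      · exact (inv_nonneg).mpr (hdpos i).le
    have := (Matrix.posSemidef_diagonal_iff.mpr hdnn).mul_mul_conjTranspose_same U
    simpa [star_eq_conjTranspose] using this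
  have hc : (0:ℝ) ≤ σ ^ 2 / 2 := by positivity
  constructor
  · rw [transpose_smul]
    congr 1
    have := hPSD.1
    rwa [Matrix.IsHermitian, conjTranspose_eq_transpose_of_trivial] at this
  · intro x
    rw [Matrix.smul_mulVec, dotProduct_smul]
    have := (posSemidef_iff_dotProduct_mulVec.mp hPSD).2 x
    simp only [star_trivial] at this
    exact smul_nonneg hc this
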